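/- With u sorted nonincreasingly, u₀ > 0, γ ≥ 1, Φ(S) = max { u(S')/(u(S')+u₀) : S' ⊆ S, |S'| ≤ γ }, and ρ_j(T) = Φ(T∪{j}) − Φ(T): for any S ⊆ [n] with |S| ≥ γ + 1, the submodular inequality w ≤ Φ(S) + ∑_{j∉S} ρ_j(S)x_j − ∑_{j∈S} ρ_j([n]\{j})(1−x_j) coincides (as a function of (w,x)) with the one defined by S^γ, i.e., Φ(S) = Φ(S^γ), ρ_j(S) = ρ_j(S^γ) for j ∉ S, ρ_j([n]\{j}) = 0 and ρ_j(S^γ) = 0 for j ∈ S\S^γ. -/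

import Mathlib

open Finset

/-- The probability function `Φ(S) = max { u(S')/(u(S')+u₀) : S' ⊆ S, |S'| ≤ γ }`. -/
noncomputable def Phi (γ : ℕ) (u : ℕ → ℝ) (u0 : ℝ) (S : Finset ℕ) : ℝ :=
  ((S.powerset.filter fun S' => S'.card ≤ γ).image
      fun S' => (∑ j ∈ S', u j) / ((∑ j ∈ S', u j) + u0)).max'
    (Finset.Nonempty.image ⟨∅, Finset.mem_filter.mpr ⟨Finset.empty_mem_powerset S, by simp⟩⟩ _)

/-- `k_S = n+1` if `|S| ≤ γ-1`, otherwise the `γ`-th smallest element of `S`. -/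
def kS (γ n : ℕ) (S : Finset ℕ) : ℕ :=
  if S.card ≤ γ - 1 then n + 1 else (S.sort (· ≤ ·)).getD (γ - 1) 0

/-- `S^γ = S ∩ [k_S]`. -/
def Sgamma (γ n : ℕ) (S : Finset ℕ) : Finset ℕ :=
  S ∩ Finset.Icc 1 (kS γ n S)



/-- Replacement lemma: any candidate subset of `B` can be replaced by one inside `A`
with at least the same sum, provided each element of `B \ A` has `γ` smaller elements in `A`. -/
lemma exists_good (γ n : ℕ) (u : ℕ → ℝ)
    (hmono : ∀ j ∈ Finset.Icc 1 n, ∀ k ∈ Finset.Icc 1 n, j ≤ k → u k ≤ u j)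
    (A B : Finset ℕ) (hAB : A ⊆ B) (hB : B ⊆ Finset.Icc 1 n)
    (hrep : ∀ b ∈ B, b ∉ A → γ ≤ (A.filter (· < b)).card) :
    ∀ m : ℕ, ∀ S' ⊆ B, S'.card ≤ γ → (S' \ A).card ≤ m →
      ∃ S'' ⊆ A, S''.card ≤ γ ∧ ∑ j ∈ S', u j ≤ ∑ j ∈ S'', u j := by
  intro m
  induction m with
  | zero =>
    intro S' hS' hc h0
    refine ⟨S', ?_, hc, le_refl _⟩
    have : S' \ A = ∅ := Finset.card_eq_zero.mp (Nat.le_zero.mp h0)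
    exact Finset.sdiff_eq_empty_iff_subset.mp this
  | succ m ih =>
    intro S' hS' hc hm
    by_cases hsub : S' ⊆ A
    · exact ⟨S', hsub, hc, le_refl _⟩
    · obtain ⟨b, hbS', hbA⟩ := Finset.not_subset.mp hsub
      have hfilter := hrep b (hS' hbS') hbA
      have hne : ¬ (A.filter (· < b) ⊆ S'.erase b) := by
        intro h
        have h1 := Finset.card_le_card h
        have h2 : (S'.erase b).card < γ :=
          lt_of_lt_of_le (Finset.card_erase_lt_of_mem hbS') hc
        omega
      obtain ⟨a, haF, haE⟩ := Finset.not_subset.mp hne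
      rw [Finset.mem_filter] at haF
      obtain ⟨haA, hab⟩ := haF
      set T := insert a (S'.erase b) with hT
      have haE' : a ∉ S'.erase b := haE
      have hTB : T ⊆ B :=
        Finset.insert_subset (hAB haA) ((Finset.erase_subset _ _).trans hS')
      have hTc : T.card ≤ γ := by
        rw [hT, Finset.card_insert_of_notMem haE', Finset.card_erase_of_mem hbS']
        have : 1 ≤ S'.card := Finset.card_pos.mpr ⟨b, hbS'⟩
        omega
      have hsum : ∑ j ∈ S', u j ≤ ∑ j ∈ T, u j := by
        rw [hT, Finset.sum_insert haE', ← Finset.add_sum_erase _ _ hbS']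
        have hub : u b ≤ u a :=
          hmono a (hB (hAB haA)) b (hB (hS' hbS')) hab.le
        linarith
      have hTm : (T \ A).card ≤ m := by
        have h1 : T \ A ⊆ (S' \ A).erase b := by
          intro x hx
          rw [Finset.mem_sdiff, hT, Finset.mem_insert, Finset.mem_erase] at hx
          rcases hx with ⟨hx1 | hx1, hx2⟩
          · exact absurd (hx1 ▸ haA) hx2
          · exact Finset.mem_erase.mpr ⟨hx1.1, Finset.mem_sdiff.mpr ⟨hx1.2, hx2⟩⟩
        have hb2 : b ∈ S' \ A := Finset.mem_sdiff.mpr ⟨hbS', hbA⟩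
        have h2 := Finset.card_le_card h1
        rw [Finset.card_erase_of_mem hb2] at h2
        omega
      obtain ⟨S'', h1, h2, h3⟩ := ih T hTB hTc hTm
      exact ⟨S'', h1, h2, hsum.trans h3⟩

lemma Phi_eq_of (γ n : ℕ) (u : ℕ → ℝ) (u0 : ℝ) (hu0 : 0 < u0)
    (hnn : ∀ j ∈ Finset.Icc 1 n, 0 ≤ u j)
    (hmono : ∀ j ∈ Finset.Icc 1 n, ∀ k ∈ Finset.Icc 1 n, j ≤ k → u k ≤ u j)
    (A B : Finset ℕ) (hAB : A ⊆ B) (hB : B ⊆ Finset.Icc 1 n)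
    (hrep : ∀ b ∈ B, b ∉ A → γ ≤ (A.filter (· < b)).card) :
    Phi γ u u0 B = Phi γ u u0 A := by
  have hA : A ⊆ Finset.Icc 1 n := hAB.trans hB
  have key : ∀ s t : ℝ, 0 ≤ s → s ≤ t → s / (s + u0) ≤ t / (t + u0) := by
    intro s t hs hst
    have h1 : (0:ℝ) < s + u0 := by linarith
    have h2 : (0:ℝ) < t + u0 := by linarith
    rw [div_le_div_iff₀ h1 h2]
    nlinarith
  have hsumnn : ∀ S' ⊆ Finset.Icc 1 n, (0:ℝ) ≤ ∑ j ∈ S', u j := by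
    intro S' h
    exact Finset.sum_nonneg fun j hj => hnn j (h hj)
  apply le_antisymm
  · apply Finset.max'_le
    intro y hy
    rw [Finset.mem_image] at hy
    obtain ⟨S', hS', rfl⟩ := hy
    rw [Finset.mem_filter, Finset.mem_powerset] at hS'
    obtain ⟨hS'B, hS'c⟩ := hS'
    obtain ⟨S'', hS''A, hS''c, hle⟩ :=
      exists_good γ n u hmono A B hAB hB hrep (S' \ A).card S' hS'B hS'c le_rfl
    have hmem : (∑ j ∈ S'', u j) / ((∑ j ∈ S'', u j) + u0) ∈
        ((A.powerset.filter fun T => T.card ≤ γ).image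
          fun T => (∑ j ∈ T, u j) / ((∑ j ∈ T, u j) + u0)) :=
      Finset.mem_image.mpr ⟨S'', Finset.mem_filter.mpr
        ⟨Finset.mem_powerset.mpr hS''A, hS''c⟩, rfl⟩
    calc (∑ j ∈ S', u j) / ((∑ j ∈ S', u j) + u0)
        ≤ (∑ j ∈ S'', u j) / ((∑ j ∈ S'', u j) + u0) :=
          key _ _ (hsumnn S' (hS'B.trans hB)) hle
      _ ≤ Phi γ u u0 A := Finset.le_max' _ _ hmem
  · apply Finset.max'_le
    intro y hy
    rw [Finset.mem_image] at hy
    obtain ⟨S', hS', rfl⟩ := hy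
    rw [Finset.mem_filter, Finset.mem_powerset] at hS'
    apply Finset.le_max'
    exact Finset.mem_image.mpr ⟨S', Finset.mem_filter.mpr
      ⟨Finset.mem_powerset.mpr (hS'.1.trans hAB), hS'.2⟩, rfl⟩


/-- for `|S| ≥ γ+1` the `S`-submodular inequality coincides with the
`S^γ`-submodular inequality: `Φ(S) = Φ(S^γ)`, `ρ_j(S) = ρ_j(S^γ)` for `j ∉ S`, and
`ρ_j([n]\{j}) = 0`, `ρ_j(S^γ) = 0` for `j ∈ S \ S^γ`. -/
theorem stmt_8 (n γ : ℕ) (hγ : 1 ≤ γ) (u : ℕ → ℝ) (u0 : ℝ) (hu0 : 0 < u0)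
    (hnn : ∀ j ∈ Finset.Icc 1 n, 0 ≤ u j)
    (hmono : ∀ j ∈ Finset.Icc 1 n, ∀ k ∈ Finset.Icc 1 n, j ≤ k → u k ≤ u j)
    (S : Finset ℕ) (hS : S ⊆ Finset.Icc 1 n) (hcard : γ + 1 ≤ S.card) :
    Phi γ u u0 S = Phi γ u u0 (Sgamma γ n S) ∧
    (∀ j ∈ Finset.Icc 1 n \ S,
      Phi γ u u0 (insert j S) - Phi γ u u0 S =
        Phi γ u u0 (insert j (Sgamma γ n S)) - Phi γ u u0 (Sgamma γ n S)) ∧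
    (∀ j ∈ S \ Sgamma γ n S,
      Phi γ u u0 (Finset.Icc 1 n) - Phi γ u u0 ((Finset.Icc 1 n).erase j) = 0 ∧
      Phi γ u u0 (insert j (Sgamma γ n S)) - Phi γ u u0 (Sgamma γ n S) = 0) := by
  classical
  -- basic facts about `k` and `Sgamma`
  have hlen : (S.sort (· ≤ ·)).length = S.card := by rw [Finset.length_sort]
  have hγlen : γ - 1 < (S.sort (· ≤ ·)).length := by omega
  have hcnot : ¬ S.card ≤ γ - 1 := by omega
  set l := S.sort (· ≤ ·) with hl
  set k := l.get ⟨γ - 1, hγlen⟩ with hkdef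
  have hkS : kS γ n S = k := by
    rw [kS, if_neg hcnot, ← hl, List.getD_eq_get l 0 ⟨γ - 1, hγlen⟩]
  have hsorted : List.Pairwise (· < ·) l :=
    ((Finset.pairwise_sort S (· ≤ ·)).and (Finset.sort_nodup S (· ≤ ·))).imp fun h => lt_of_le_of_ne h.1 h.2
  have hSg : Sgamma γ n S = S.filter (· ≤ k) := by
    ext a
    simp only [Sgamma, hkS, Finset.mem_inter, Finset.mem_Icc, Finset.mem_filter]
    constructor
    · rintro ⟨h1, _, h3⟩; exact ⟨h1, h3⟩
    · rintro ⟨h1, h2⟩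
      exact ⟨h1, (Finset.mem_Icc.mp (hS h1)).1, h2⟩
  have himg : S.filter (· ≤ k) = (Finset.range γ).image (fun i => l.getD i 0) := by
    ext a
    simp only [Finset.mem_filter, Finset.mem_image, Finset.mem_range]
    constructor
    · rintro ⟨haS, hak⟩
      have hal : a ∈ l := (Finset.mem_sort _).mpr haS
      obtain ⟨⟨i, hi⟩, rfl⟩ := List.mem_iff_get.mp hal
      refine ⟨i, ?_, List.getD_eq_get l 0 ⟨i, hi⟩⟩
      by_contra hih
      push_neg at hih
      have hlt : (⟨γ - 1, hγlen⟩ : Fin l.length) < ⟨i, hi⟩ := by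
        simp only [Fin.lt_def]; omega
      exact absurd hak (not_le.mpr (hsorted.rel_get_of_lt hlt))
    · rintro ⟨i, hi, rfl⟩
      have hi' : i < l.length := by omega
      rw [List.getD_eq_get l 0 ⟨i, hi'⟩]
      refine ⟨(Finset.mem_sort _).mp (l.get_mem ⟨i, hi'⟩), ?_⟩
      rcases Nat.lt_or_ge i (γ - 1) with h | h
      · exact le_of_lt (hsorted.rel_get_of_lt (by simp only [Fin.lt_def]; omega))
      · have hieq : i = γ - 1 := by omega
        subst hieq; exact le_rfl
  have hSgcard : (Sgamma γ n S).card = γ := by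
    rw [hSg, himg, Finset.card_image_of_injOn, Finset.card_range]
    intro i hi j hj hij
    simp only [Finset.coe_range, Set.mem_Iio] at hi hj
    have hi' : i < l.length := by omega
    have hj' : j < l.length := by omega
    simp only at hij
    rw [List.getD_eq_get l 0 ⟨i, hi'⟩, List.getD_eq_get l 0 ⟨j, hj'⟩] at hij
    by_contra hne
    rcases Nat.lt_or_ge i j with h | h
    · exact absurd hij (ne_of_lt (hsorted.rel_get_of_lt (by simp only [Fin.lt_def]; omega)))
    · have hji : j < i := by omega
      exact absurd hij.symm
        (ne_of_lt (hsorted.rel_get_of_lt (by simp only [Fin.lt_def]; omega)))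
  have hSgsub : Sgamma γ n S ⊆ S := by rw [hSg]; exact Finset.filter_subset _ _
  have hSgle : ∀ a ∈ Sgamma γ n S, a ≤ k := by
    intro a ha; rw [hSg, Finset.mem_filter] at ha; exact ha.2
  have hnotin : ∀ b ∈ S, b ∉ Sgamma γ n S → k < b := by
    intro b hb hbn
    rw [hSg, Finset.mem_filter] at hbn
    push_neg at hbn
    exact hbn hb
  have hγk : γ ≤ k := by
    have hsub : Sgamma γ n S ⊆ Finset.Icc 1 k := by
      intro a ha
      exact Finset.mem_Icc.mpr ⟨(Finset.mem_Icc.mp (hS (hSgsub ha))).1, hSgle a ha⟩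
    have := Finset.card_le_card hsub
    rw [hSgcard, Nat.card_Icc] at this
    omega
  have hγn : γ + 1 ≤ n := by
    have := Finset.card_le_card hS
    rw [Nat.card_Icc] at this
    omega
  -- Part 1
  have main1 : Phi γ u u0 S = Phi γ u u0 (Sgamma γ n S) := by
    apply Phi_eq_of γ n u u0 hu0 hnn hmono _ _ hSgsub hS
    intro b hb hbn
    have hkb := hnotin b hb hbn
    have hsub : Sgamma γ n S ⊆ (Sgamma γ n S).filter (· < b) := fun a ha =>
      Finset.mem_filter.mpr ⟨ha, lt_of_le_of_lt (hSgle a ha) hkb⟩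
    calc γ = (Sgamma γ n S).card := hSgcard.symm
      _ ≤ _ := Finset.card_le_card hsub
  refine ⟨main1, ?_, ?_⟩
  · -- Part 2
    intro j hj
    have hjmem := Finset.mem_sdiff.mp hj
    have main2 : Phi γ u u0 (insert j S) = Phi γ u u0 (insert j (Sgamma γ n S)) := by
      apply Phi_eq_of γ n u u0 hu0 hnn hmono _ _
        (Finset.insert_subset_insert _ hSgsub) (Finset.insert_subset hjmem.1 hS)
      intro b hb hbn
      rw [Finset.mem_insert] at hb
      have hbS : b ∈ S := by
        rcases hb with rfl | h
        · exact absurd (Finset.mem_insert_self _ _) hbn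
        · exact h
      have hbn' : b ∉ Sgamma γ n S := fun h => hbn (Finset.mem_insert_of_mem h)
      have hkb := hnotin b hbS hbn'
      have hsub : Sgamma γ n S ⊆ (insert j (Sgamma γ n S)).filter (· < b) := fun a ha =>
        Finset.mem_filter.mpr ⟨Finset.mem_insert_of_mem ha,
          lt_of_le_of_lt (hSgle a ha) hkb⟩
      calc γ = (Sgamma γ n S).card := hSgcard.symm
        _ ≤ _ := Finset.card_le_card hsub
    rw [main1, main2]
  · -- Part 3
    intro j hj
    have hjmem := Finset.mem_sdiff.mp hj
    have hkj : k < j := hnotin j hjmem.1 hjmem.2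
    have hγj : γ < j := lt_of_le_of_lt hγk hkj
    constructor
    · have h3a : Phi γ u u0 (Finset.Icc 1 n) = Phi γ u u0 ((Finset.Icc 1 n).erase j) := by
        apply Phi_eq_of γ n u u0 hu0 hnn hmono _ _ (Finset.erase_subset _ _) subset_rfl
        intro b hb hbn
        have hbj : b = j := by
          by_contra hne
          exact hbn (Finset.mem_erase.mpr ⟨hne, hb⟩)
        subst hbj
        have hsub : Finset.Icc 1 γ ⊆ ((Finset.Icc 1 n).erase b).filter (· < b) := by
          intro a ha
          rw [Finset.mem_Icc] at ha
          refine Finset.mem_filter.mpr ⟨Finset.mem_erase.mpr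
            ⟨by omega, Finset.mem_Icc.mpr ⟨ha.1, by omega⟩⟩, by omega⟩
        have := Finset.card_le_card hsub
        rw [Nat.card_Icc] at this
        omega
      rw [h3a, sub_self]
    · have h3b : Phi γ u u0 (insert j (Sgamma γ n S)) = Phi γ u u0 (Sgamma γ n S) := by
        apply Phi_eq_of γ n u u0 hu0 hnn hmono _ _ (Finset.subset_insert _ _)
          (Finset.insert_subset (hS hjmem.1) (hSgsub.trans hS))
        intro b hb hbn
        rw [Finset.mem_insert] at hb
        have hbj : b = j := by
          rcases hb with rfl | h
          · rfl
          · exact absurd h hbn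
        subst hbj
        have hsub : Sgamma γ n S ⊆ (Sgamma γ n S).filter (· < b) := fun a ha =>
          Finset.mem_filter.mpr ⟨ha, lt_of_le_of_lt (hSgle a ha) hkj⟩
        calc γ = (Sgamma γ n S).card := hSgcard.symm
          _ ≤ _ := Finset.card_le_card hsub
      rw [h3b, sub_self]
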